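/- arXiv:2208.06855 — 4 statements merged into one kernel-verified Lean document; each statement's English description precedes it below -/
import Mathlib

section
/- The number of m-ary necklaces of length n (equivalence classes of functions from Fin n to Fin m under cyclic rotation) equals (1/n) * Σ_{d | n} φ(d) * m^(n/d), where φ is Euler's totient function. -/
/-- Cyclic rotation on strings of length `n`: sends `(x₁,…,xₙ)` to `(x₂,…,xₙ,x₁)`. -/
def rot {m n : ℕ} (w : Fin n → Fin m) : Fin n → Fin m := fun k => w ⟨(k.val + 1) % n, Nat.mod_lt _ k.pos⟩

/-- Two strings are rotation-equivalent if some power of the rotation sends one to the other. -/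
def rotRel {m n : ℕ} (y z : Fin n → Fin m) : Prop := ∃ j : ℕ, rot^[j] y = z

lemma rot_iterate {m n : ℕ} (j : ℕ) (w : Fin n → Fin m) (k : Fin n) :
    rot^[j] w k = w ⟨(k.val + j) % n, Nat.mod_lt _ k.pos⟩ := by
  induction j generalizing w k with
  | zero => congr 1 <;> simp [Nat.mod_eq_of_lt k.isLt]
  | succ j ih =>
      rw [Function.iterate_succ_apply', rot, ih]
      congr 1
      ext
      simp only
      rw [Nat.mod_add_mod]
      ring_nf

lemma rot_iterate_mod {m n : ℕ} (j : ℕ) (w : Fin n → Fin m) :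
    rot^[j % n] w = rot^[j] w := by
  funext k
  rw [rot_iterate, rot_iterate]
  congr 1
  ext
  simp only
  rw [Nat.add_mod, Nat.mod_mod_of_dvd _ dvd_rfl, ← Nat.add_mod]

instance rotAction (m n : ℕ) [NeZero n] : AddAction (ZMod n) (Fin n → Fin m) where
  vadd a w := rot^[a.val] w
  zero_vadd w := by
    show rot^[(0 : ZMod n).val] w = w
    simp [ZMod.val_zero]
  add_vadd a b w := by
    show rot^[(a+b).val] w = rot^[a.val] (rot^[b.val] w)
    rw [← Function.iterate_add_apply, ZMod.val_add, rot_iterate_mod]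

lemma per_iter {m n : ℕ} (hn : 0 < n) (s : ℕ) (w : Fin n → Fin m)
    (hw : ∀ k : Fin n, w ⟨(k.val + s) % n, Nat.mod_lt _ hn⟩ = w k) :
    ∀ t : ℕ, ∀ k : Fin n, w ⟨(k.val + t * s) % n, Nat.mod_lt _ hn⟩ = w k := by
  intro t
  induction t with
  | zero => intro k; simp only [Nat.zero_mul, Nat.add_zero]; congr 1; ext; simp [Nat.mod_eq_of_lt k.isLt]
  | succ t ih =>
      intro k
      have h1 := hw ⟨(k.val + t * s) % n, Nat.mod_lt _ hn⟩
      have h2 : ((k.val + t * s) % n + s) % n = (k.val + (t+1) * s) % n := by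
        rw [Nat.mod_add_mod]; ring_nf
      have h3 : (⟨((k.val + t * s) % n + s) % n, Nat.mod_lt _ hn⟩ : Fin n)
          = ⟨(k.val + (t+1) * s) % n, Nat.mod_lt _ hn⟩ := Fin.ext h2
      rw [h3] at h1
      rw [h1]
      exact ih k

/-- There is a natural `a` with `a * j ≡ gcd j n [MOD n]`. -/
lemma exists_nat_bezout (j n : ℕ) (hn : 0 < n) : ∃ a : ℕ, (a * j) % n = (Nat.gcd j n) % n := by
  refine ⟨((Nat.gcdA j n) % (n:ℤ)).toNat, ?_⟩
  have hn' : (0:ℤ) < n := by exact_mod_cast hn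
  have ha : ((((Nat.gcdA j n) % (n:ℤ)).toNat : ℕ) : ℤ) = (Nat.gcdA j n) % (n:ℤ) :=
    Int.toNat_of_nonneg (Int.emod_nonneg _ hn'.ne')
  have key : ((((Nat.gcdA j n) % (n:ℤ)).toNat * j : ℕ) : ℤ) % n = ((Nat.gcd j n : ℕ) : ℤ) % n := by
    push_cast [ha]
    rw [Int.mul_emod, Int.emod_emod_of_dvd _ dvd_rfl, ← Int.mul_emod]
    rw [Nat.gcd_eq_gcd_ab j n, Int.add_mul_emod_self_left, mul_comm]
  have := congrArg Int.toNat key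
  rwa [← Int.natCast_mod, ← Int.natCast_mod, Int.toNat_natCast, Int.toNat_natCast] at this

lemma fixed_card (m : ℕ) {n : ℕ} (hn : 0 < n) (j : ℕ) :
    Nat.card {w : Fin n → Fin m // rot^[j] w = w} = m ^ (Nat.gcd j n) := by
  set d := Nat.gcd j n with hd_def
  have hd : 0 < d := Nat.gcd_pos_of_pos_right j hn
  have hdn : d ∣ n := Nat.gcd_dvd_right j n
  have hdj : d ∣ j := Nat.gcd_dvd_left j n
  have hdle : d ≤ n := Nat.le_of_dvd hn hdn
  have hiff : ∀ w : Fin n → Fin m, (rot^[j] w = w) ↔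
      (∀ k : Fin n, w ⟨(k.val + d) % n, Nat.mod_lt _ hn⟩ = w k) := by
    intro w
    constructor
    · intro hw k
      have hw' : ∀ k : Fin n, w ⟨(k.val + j) % n, Nat.mod_lt _ hn⟩ = w k := by
        intro k
        conv_rhs => rw [← hw]
        rw [rot_iterate]
      obtain ⟨a, ha⟩ := exists_nat_bezout j n hn
      have h1 := per_iter hn j w hw' a k
      have he : (k.val + a * j) % n = (k.val + d) % n := by
        rw [Nat.add_mod, ha, ← Nat.add_mod]
      rwa [show (⟨(k.val + a * j) % n, Nat.mod_lt _ hn⟩ : Fin n)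
        = ⟨(k.val + d) % n, Nat.mod_lt _ hn⟩ from Fin.ext he] at h1
    · intro hw
      funext k
      rw [rot_iterate]
      have h1 := per_iter hn d w hw (j / d) k
      rwa [show (⟨(k.val + j / d * d) % n, Nat.mod_lt _ hn⟩ : Fin n)
        = ⟨(k.val + j) % n, Nat.mod_lt _ k.pos⟩
        from Fin.ext (by simp only []; rw [Nat.div_mul_cancel hdj])] at h1
  have e1 : {w : Fin n → Fin m // rot^[j] w = w} ≃
      {w : Fin n → Fin m // ∀ k : Fin n, w ⟨(k.val + d) % n, Nat.mod_lt _ hn⟩ = w k} :=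
    Equiv.subtypeEquivRight hiff
  have e2 : {w : Fin n → Fin m // ∀ k : Fin n, w ⟨(k.val + d) % n, Nat.mod_lt _ hn⟩ = w k} ≃
      (Fin d → Fin m) := by
    refine ⟨fun w i => w.1 ⟨i.val, lt_of_lt_of_le i.isLt hdle⟩,
      fun v => ⟨fun k => v ⟨k.val % d, Nat.mod_lt _ hd⟩, ?_⟩, ?_, ?_⟩
    · intro k
      show v ⟨((k.val + d) % n) % d, Nat.mod_lt _ hd⟩ = v ⟨k.val % d, Nat.mod_lt _ hd⟩
      congr 1
      ext
      simp only
      rw [Nat.mod_mod_of_dvd _ hdn, Nat.add_mod_right]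
    · intro w
      refine Subtype.ext (funext fun k => ?_)
      simp only
      have h1 := per_iter hn d w.1 w.2 (k.val / d)
        ⟨k.val % d, lt_of_lt_of_le (Nat.mod_lt _ hd) hdle⟩
      have he : ((k.val % d) + (k.val / d) * d) % n = k.val := by
        rw [Nat.mod_add_div' k.val d]
        exact Nat.mod_eq_of_lt k.isLt
      rw [show (⟨((⟨k.val % d, lt_of_lt_of_le (Nat.mod_lt _ hd) hdle⟩ : Fin n).val
          + (k.val / d) * d) % n, Nat.mod_lt _ hn⟩ : Fin n) = k from Fin.ext he] at h1
      rw [← h1]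
    · intro v
      funext i
      simp only
      congr 1
      ext
      simp only
      exact Nat.mod_eq_of_lt i.isLt
  rw [Nat.card_congr (e1.trans e2), Nat.card_eq_fintype_card, Fintype.card_fun,
    Fintype.card_fin, Fintype.card_fin]

lemma rot_inv {m n : ℕ} (hn : 0 < n) {y z : Fin n → Fin m} (h : ∃ j, rot^[j] y = z) :
    ∃ j, rot^[j] z = y := by
  obtain ⟨j, rfl⟩ := h
  refine ⟨n - j % n, ?_⟩
  rw [← Function.iterate_add_apply, ← rot_iterate_mod]
  have hqr := Nat.div_add_mod j n
  have hrlt : j % n < n := Nat.mod_lt j hn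
  have h2 : n - j % n + j = n * (j / n) + n := by
    generalize j / n = q at hqr ⊢
    generalize j % n = r at hqr hrlt ⊢
    generalize n * q = t at hqr ⊢
    omega
  rw [h2, Nat.add_mod, Nat.mul_mod_right, Nat.mod_self]
  simp

lemma rotRel_iff_orbit {m n : ℕ} [NeZero n] (y z : Fin n → Fin m) :
    rotRel y z ↔ y ∈ AddAction.orbit (ZMod n) z := by
  have hn : 0 < n := Nat.pos_of_ne_zero (NeZero.ne n)
  constructor
  · intro h
    obtain ⟨j, hj⟩ := rot_inv hn h
    refine ⟨(j : ZMod n), ?_⟩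
    show rot^[((j : ZMod n)).val] z = y
    rw [ZMod.val_natCast, rot_iterate_mod, hj]
  · rintro ⟨a, ha⟩
    exact rot_inv hn ⟨a.val, ha⟩

lemma gcd_pow_sum (m n : ℕ) (hn : 0 < n) :
    ∑ j ∈ Finset.range n, m ^ Nat.gcd j n = ∑ d ∈ n.divisors, Nat.totient d * m ^ (n / d) := by
  have h1 : ∑ j ∈ Finset.range n, m ^ Nat.gcd j n = ∑ j ∈ Finset.range n, m ^ Nat.gcd n j := by
    simp [Nat.gcd_comm]
  rw [h1, ← Finset.sum_fiberwise_of_maps_to (g := fun j => Nat.gcd n j) (t := n.divisors)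
    (fun x _ => Nat.mem_divisors.2 ⟨Nat.gcd_dvd_left n x, hn.ne'⟩)]
  have h2 : ∀ d ∈ n.divisors,
      (∑ j ∈ Finset.range n with Nat.gcd n j = d, m ^ Nat.gcd n j)
        = Nat.totient (n / d) * m ^ d := by
    intro d hd
    rw [Finset.sum_congr rfl (fun j hj => by
      rw [(Finset.mem_filter.1 hj).2]), Finset.sum_const, smul_eq_mul,
      ← Nat.totient_div_of_dvd (Nat.mem_divisors.1 hd).1]
  rw [Finset.sum_congr rfl h2]
  have h3 : ∀ d ∈ n.divisors,
      Nat.totient (n / d) * m ^ d = Nat.totient (n / d) * m ^ (n / (n / d)) := by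
    intro d hd
    obtain ⟨hdvd, -⟩ := Nat.mem_divisors.1 hd
    have hd0 : d ≠ 0 := by
      rintro rfl
      exact hn.ne' (Nat.eq_zero_of_zero_dvd hdvd)
    rw [Nat.div_div_self hdvd hn.ne']
  rw [Finset.sum_congr rfl h3]
  exact Nat.sum_div_divisors n (fun d => Nat.totient d * m ^ (n / d))

/-- The number of `m`-ary necklaces of length `n` equals
`(1/n) * ∑_{d ∣ n} φ(d) * m^(n/d)`. -/
theorem necklace_count (m n : ℕ) (hn : 0 < n) :
    n * Nat.card (Quot (@rotRel m n)) =
      ∑ d ∈ n.divisors, Nat.totient d * m ^ (n / d) := by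
  haveI : NeZero n := ⟨hn.ne'⟩
  haveI : ∀ a : ZMod n, Fintype (AddAction.fixedBy (Fin n → Fin m) a) :=
    fun a => Fintype.ofFinite _
  haveI : Fintype (Quotient (AddAction.orbitRel (ZMod n) (Fin n → Fin m))) :=
    Fintype.ofFinite _
  have burnside := AddAction.sum_card_fixedBy_eq_card_orbits_mul_card_addGroup
    (ZMod n) (Fin n → Fin m)
  have hquot : Nat.card (Quot (@rotRel m n)) =
      Fintype.card (Quotient (AddAction.orbitRel (ZMod n) (Fin n → Fin m))) := by
    rw [← Nat.card_eq_fintype_card]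
    exact Nat.card_congr (Quot.congrRight (fun y z => rotRel_iff_orbit y z))
  have hfix : ∀ a : ZMod n, Fintype.card (AddAction.fixedBy (Fin n → Fin m) a)
      = m ^ Nat.gcd a.val n := by
    intro a
    rw [← Nat.card_eq_fintype_card, ← fixed_card m hn a.val]
    exact Nat.card_congr (Equiv.subtypeEquivRight (fun w => Iff.rfl))
  calc n * Nat.card (Quot (@rotRel m n))
      = Fintype.card (Quotient (AddAction.orbitRel (ZMod n) (Fin n → Fin m)))
          * Fintype.card (ZMod n) := by rw [hquot, ZMod.card n, mul_comm]
    _ = ∑ a : ZMod n, Fintype.card (AddAction.fixedBy (Fin n → Fin m) a) := burnside.symm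
    _ = ∑ a : ZMod n, m ^ Nat.gcd a.val n := Finset.sum_congr rfl (fun a _ => hfix a)
    _ = ∑ j ∈ Finset.range n, m ^ Nat.gcd j n := by
        rw [← Fin.sum_univ_eq_sum_range (fun j => m ^ Nat.gcd j n) n]
        exact Fintype.sum_bijective (fun a : ZMod n => (⟨a.val, ZMod.val_lt a⟩ : Fin n))
          ⟨fun a b h => ZMod.val_injective n (congrArg Fin.val h),
           fun i => ⟨(i.val : ZMod n), Fin.ext (ZMod.val_cast_of_lt i.isLt)⟩⟩
          _ _ (fun a => rfl)
    _ = ∑ d ∈ n.divisors, Nat.totient d * m ^ (n / d) := gcd_pow_sum m n hn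
end

section
/- The number of Lyndon words of length n over an alphabet of size m equals (1/n) * Σ_{d | n} μ(d) * m^(n/d), where μ is the Möbius function. -/
/-- Strict lexicographic order on strings. -/
def lexLt {m n : ℕ} (y z : Fin n → Fin m) : Prop :=
  ∃ k : Fin n, (∀ l, l < k → y l = z l) ∧ y k < z k

/-- A Lyndon word: strictly lexicographically smaller than all its nontrivial rotations. -/
def IsLyndon {m n : ℕ} (w : Fin n → Fin m) : Prop :=
  ∀ j, 0 < j → j < n → lexLt w (rot^[j] w)

namespace LyndonCount

open Function Finset

variable {m n : ℕ}

lemma rot_iterate_apply (w : Fin n → Fin m) (j : ℕ) (k : Fin n) :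
    rot^[j] w k = w ⟨(k.val + j) % n, Nat.mod_lt _ k.pos⟩ := by
  induction j generalizing w with
  | zero =>
      simp only [Function.iterate_zero_apply]
      congr 1
      exact Fin.ext (by simp [Nat.mod_eq_of_lt k.isLt])
  | succ j ih =>
      rw [Function.iterate_succ_apply, ih (rot w)]
      show w ⟨((k.val + j) % n + 1) % n, _⟩ = w ⟨(k.val + (j+1)) % n, _⟩
      congr 1
      exact Fin.ext (by simp only [Fin.val_mk]; rw [Nat.mod_add_mod, add_assoc])

lemma rot_n (w : Fin n → Fin m) : rot^[n] w = w := by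
  funext k
  rw [rot_iterate_apply]
  congr 1
  exact Fin.ext (by simp [Nat.add_mod_right, Nat.mod_eq_of_lt k.isLt])

lemma isPeriodicPt_rot_n (w : Fin n → Fin m) : IsPeriodicPt rot n w := rot_n w

lemma mem_periodicPts_rot (hn : 0 < n) (w : Fin n → Fin m) : w ∈ periodicPts rot :=
  mk_mem_periodicPts hn (isPeriodicPt_rot_n w)

lemma rot_injective (hn : 0 < n) :
    Function.Injective (rot : (Fin n → Fin m) → Fin n → Fin m) := by
  intro a b h
  obtain ⟨p, rfl⟩ : ∃ p, n = p + 1 := ⟨n - 1, (Nat.succ_pred_eq_of_pos hn).symm⟩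
  calc a = rot^[p+1] a := (rot_n a).symm
    _ = rot^[p] (rot a) := Function.iterate_succ_apply ..
    _ = rot^[p] (rot b) := by rw [h]
    _ = rot^[p+1] b := (Function.iterate_succ_apply ..).symm
    _ = b := rot_n b

lemma rot_iter_injective (hn : 0 < n) (j : ℕ) :
    Function.Injective ((rot : (Fin n → Fin m) → Fin n → Fin m)^[j]) :=
  (rot_injective hn).iterate j

lemma lexLt_iff (y z : Fin n → Fin m) : lexLt y z ↔ toLex y < toLex z := Iff.rfl

lemma lexLt_irrefl (y : Fin n → Fin m) : ¬ lexLt y y := fun ⟨_, _, hk⟩ => lt_irrefl _ hk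

lemma lyndon_minimalPeriod_eq (hn : 0 < n) {w : Fin n → Fin m} (h : IsLyndon w) :
    minimalPeriod rot w = n := by
  have hd : minimalPeriod rot w ∣ n := (isPeriodicPt_rot_n w).minimalPeriod_dvd
  have hpos : 0 < minimalPeriod rot w := (isPeriodicPt_rot_n w).minimalPeriod_pos hn
  by_contra hne
  have hlt : minimalPeriod rot w < n := lt_of_le_of_ne (Nat.le_of_dvd hn hd) hne
  have h2 := h _ hpos hlt
  have heq : rot^[minimalPeriod rot w] w = w := isPeriodicPt_minimalPeriod rot w
  rw [heq] at h2
  exact lexLt_irrefl _ h2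

lemma iterate_inj_of_minimalPeriod (hn : 0 < n) {w : Fin n → Fin m}
    (hw : minimalPeriod rot w = n) {j j' : ℕ} (hj : j < n) (hj' : j' < n)
    (h : rot^[j] w = rot^[j'] w) : j = j' := by
  wlog hle : j ≤ j' generalizing j j'
  · exact (this hj' hj h.symm (le_of_not_ge hle)).symm
  have h1 : rot^[j] (rot^[j' - j] w) = rot^[j] w := by
    rw [← Function.iterate_add_apply]
    rw [show j + (j' - j) = j' from by omega]
    exact h.symm
  have h2 : rot^[j' - j] w = w := rot_iter_injective hn j h1
  have h2' : IsPeriodicPt rot (j' - j) w := h2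
  have h3 : n ∣ j' - j := hw ▸ h2'.minimalPeriod_dvd
  rcases Nat.eq_zero_or_pos (j' - j) with h0 | hp
  · omega
  · have := Nat.le_of_dvd hp h3; omega

lemma lyndon_unique (hn : 0 < n) {w v : Fin n → Fin m} (hw : IsLyndon w) (hv : IsLyndon v)
    (j : ℕ) (h : rot^[j] w = v) : w = v := by
  have hper : IsPeriodicPt rot n w := isPeriodicPt_rot_n w
  have h' : rot^[j % n] w = v := by rw [hper.iterate_mod_apply j]; exact h
  rcases Nat.eq_zero_or_pos (j % n) with h0 | hp
  · rw [h0] at h'; exact h'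
  · exfalso
    have hlt : j % n < n := Nat.mod_lt j hn
    have h1 : lexLt w v := h' ▸ hw _ hp hlt
    have h2 : rot^[n - j % n] v = w := by
      rw [← h', ← Function.iterate_add_apply]
      rw [show n - j % n + j % n = n from by omega]
      exact hper
    have h3 : lexLt v w := h2 ▸ hv _ (by omega) (by omega)
    rw [lexLt_iff] at h1 h3
    exact lt_asymm h1 h3

/-- The minimum of the rotation orbit of an aperiodic word is Lyndon and the orbit
of the minimum contains the original word. -/
lemma exists_lyndon_in_orbit (hn : 0 < n) {v : Fin n → Fin m}
    (hv : minimalPeriod rot v = n) :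
    ∃ w : Fin n → Fin m, IsLyndon w ∧ ∃ j : Fin n, rot^[j.val] w = v := by
  classical
  letI : WellFoundedLT (Fin n) := Finite.to_wellFoundedLT
  have : Nonempty (Fin n) := ⟨⟨0, hn⟩⟩
  set T : Finset (Lex (Fin n → Fin m)) :=
    Finset.univ.image (fun j : Fin n => toLex (rot^[j.val] v)) with hT
  have hne : T.Nonempty := Finset.Nonempty.image Finset.univ_nonempty _
  obtain ⟨i, -, hi⟩ := Finset.mem_image.mp (T.min'_mem hne)
  set w : Fin n → Fin m := rot^[i.val] v with hwdef
  have hwmin : minimalPeriod rot w = n := by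
    rw [hwdef, minimalPeriod_apply_iterate (mem_periodicPts_rot hn v), hv]
  have hle : ∀ u ∈ T, toLex w ≤ u := by
    intro u hu
    exact hi.trans_le (T.min'_le u hu)
  refine ⟨w, ?_, ?_⟩
  · intro j hj hjn
    have hmem : toLex (rot^[j] w) ∈ T := by
      have : rot^[j] w = rot^[(⟨(j + i.val) % n, Nat.mod_lt _ hn⟩ : Fin n).val] v := by
        rw [hwdef, ← Function.iterate_add_apply]
        exact ((isPeriodicPt_rot_n v).iterate_mod_apply (j + i.val)).symm
      rw [this]
      exact Finset.mem_image.mpr ⟨_, Finset.mem_univ _, rfl⟩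
    have hle' := hle _ hmem
    have hnee : toLex w ≠ toLex (rot^[j] w) := by
      intro hEq
      have : rot^[j] w = rot^[0] w := by
        simpa using (toLex.injective hEq).symm
      have := iterate_inj_of_minimalPeriod hn hwmin hjn hn this
      omega
    exact (lexLt_iff _ _).mpr (lt_of_le_of_ne hle' hnee)
  · refine ⟨⟨(n - i.val) % n, Nat.mod_lt _ hn⟩, ?_⟩
    show rot^[(n - i.val) % n] w = v
    rw [(isPeriodicPt_rot_n w).iterate_mod_apply, hwdef, ← Function.iterate_add_apply]
    rw [show n - i.val + i.val = n from by omega]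
    exact rot_n v

open Classical in
lemma card_aperiodic (hn : 0 < n) :
    (Finset.univ.filter fun w : Fin n → Fin m => minimalPeriod rot w = n).card =
      n * (Finset.univ.filter fun w : Fin n → Fin m => IsLyndon w).card := by
  classical
  rw [show n * (Finset.univ.filter fun w : Fin n → Fin m => IsLyndon w).card =
      ((Finset.univ : Finset (Fin n)) ×ˢ
        (Finset.univ.filter fun w : Fin n → Fin m => IsLyndon w)).card from by
    rw [Finset.card_product, Finset.card_univ, Fintype.card_fin]]
  refine (Finset.card_bij (fun p _ => rot^[p.1.val] p.2) ?_ ?_ ?_).symm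
  · rintro ⟨j, w⟩ hp
    simp only [Finset.mem_product, Finset.mem_filter, Finset.mem_univ, true_and] at hp ⊢
    rw [minimalPeriod_apply_iterate (mem_periodicPts_rot hn w),
      lyndon_minimalPeriod_eq hn hp]
  · rintro ⟨j, w⟩ hp ⟨j', w'⟩ hp' h
    dsimp only at h
    simp only [Finset.mem_product, Finset.mem_filter, Finset.mem_univ, true_and] at hp hp'
    have hww' : w = w' := by
      have : rot^[(n - j'.val) + j.val] w = w' := by
        rw [Function.iterate_add_apply, h, ← Function.iterate_add_apply]
        rw [show n - j'.val + j'.val = n from by omega]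
        exact rot_n w'
      exact lyndon_unique hn hp hp' _ this
    subst hww'
    have := iterate_inj_of_minimalPeriod hn (lyndon_minimalPeriod_eq hn hp) j.isLt j'.isLt h
    exact Prod.ext (Fin.ext this) rfl
  · intro v hv
    simp only [Finset.mem_filter, Finset.mem_univ, true_and] at hv
    obtain ⟨w, hw, j, hj⟩ := exists_lyndon_in_orbit hn hv
    exact ⟨(j, w), by simp [hw], hj⟩

/-- Extension of a word of length `d` to a `d`-periodic word of length `n`. -/
lemma periodic_mod {d : ℕ} (hn : 0 < n) (hdn : d ∣ n) (hd : 0 < d) {w : Fin n → Fin m}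
    (hw : rot^[d] w = w) (k : ℕ) (hk : k < n) :
    w ⟨k, hk⟩ = w ⟨k % d, lt_of_lt_of_le (Nat.mod_lt _ hd) (Nat.le_of_dvd hn hdn)⟩ := by
  induction k using Nat.strong_induction_on with
  | _ k ih =>
    rcases lt_or_ge k d with hlt | hge
    · congr 1
      exact Fin.ext (by simp [Nat.mod_eq_of_lt hlt])
    · have hkd : k - d < n := by omega
      have h1 : w ⟨k, hk⟩ = w ⟨k - d, hkd⟩ := by
        have := congrFun hw ⟨k - d, hkd⟩
        rw [rot_iterate_apply] at this
        rw [← this]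
        congr 1
        exact Fin.ext (by simp only [Fin.val_mk]
                          rw [show k - d + d = k from by omega, Nat.mod_eq_of_lt hk])
      rw [h1, ih (k - d) (by omega) hkd]
      congr 1
      exact Fin.ext (by simp only [Fin.val_mk]
                        conv_rhs => rw [show k = (k - d) + d from by omega]
                        rw [Nat.add_mod_right])

open Classical in
lemma card_fixed (hn : 0 < n) {d : ℕ} (hdn : d ∣ n) :
    (Finset.univ.filter fun w : Fin n → Fin m => rot^[d] w = w).card = m ^ d := by
  classical
  have hd : 0 < d := Nat.pos_of_dvd_of_pos hdn hn
  have hdle : d ≤ n := Nat.le_of_dvd hn hdn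
  rw [show (m : ℕ) ^ d = (Finset.univ : Finset (Fin d → Fin m)).card from by
    simp [Finset.card_univ]]
  refine (Finset.card_bij
    (fun f _ => fun k : Fin n => f ⟨k.val % d, Nat.mod_lt _ hd⟩) ?_ ?_ ?_).symm
  · intro f _
    simp only [Finset.mem_filter, Finset.mem_univ, true_and]
    funext k
    rw [rot_iterate_apply]
    congr 1
    exact Fin.ext (by
      simp only [Fin.val_mk]
      rw [Nat.mod_mod_of_dvd _ hdn, Nat.add_mod_right])
  · intro f _ f' _ h
    funext j
    have := congrFun h ⟨j.val, lt_of_lt_of_le j.isLt hdle⟩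
    simpa [Nat.mod_eq_of_lt j.isLt] using this
  · intro w hw
    simp only [Finset.mem_filter, Finset.mem_univ, true_and] at hw
    refine ⟨fun j : Fin d => w ⟨j.val, lt_of_lt_of_le j.isLt hdle⟩, Finset.mem_univ _, ?_⟩
    funext k
    exact (periodic_mod hn hdn hd hw k.val k.isLt).symm

open Classical in
lemma card_fixed_eq_sum (hn : 0 < n) {d : ℕ} (hdn : d ∣ n) :
    (Finset.univ.filter fun w : Fin n → Fin m => rot^[d] w = w).card =
      ∑ e ∈ d.divisors,
        (Finset.univ.filter fun w : Fin n → Fin m => minimalPeriod rot w = e).card := by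
  classical
  have hd : 0 < d := Nat.pos_of_dvd_of_pos hdn hn
  rw [Finset.card_eq_sum_card_fiberwise
    (f := fun w : Fin n → Fin m => minimalPeriod rot w) (t := d.divisors) ?_]
  · refine Finset.sum_congr rfl fun e he => ?_
    congr 1
    ext w
    simp only [Finset.mem_filter, Finset.mem_univ, true_and]
    constructor
    · rintro ⟨-, h⟩; exact h
    · intro h
      refine ⟨?_, h⟩
      exact isPeriodicPt_iff_minimalPeriod_dvd.mpr (h ▸ (Nat.mem_divisors.mp he).1)
  · intro w hw
    simp only [Finset.mem_coe, Finset.mem_filter, Finset.mem_univ, true_and] at hw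
    have hw' : IsPeriodicPt rot d w := hw
    exact Nat.mem_divisors.mpr ⟨hw'.minimalPeriod_dvd, hd.ne'⟩

end LyndonCount

/-- The number of Lyndon words of length `n` over an alphabet of size `m` equals
`(1/n) * ∑_{d ∣ n} μ(d) m^(n/d)` (stated multiplied through by `n`). -/
theorem lyndon_count (m n : ℕ) (hn : 0 < n) :
    (n : ℤ) * Nat.card {w : Fin n → Fin m // IsLyndon w} =
      ∑ d ∈ n.divisors, (ArithmeticFunction.moebius d) * (m : ℤ) ^ (n / d) := by
  classical
  open LyndonCount Function in
  have key := (ArithmeticFunction.sum_eq_iff_sum_mul_moebius_eq_on (R := ℤ)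
    (f := fun e => ((Finset.univ.filter
        fun w : Fin n → Fin m => minimalPeriod rot w = e).card : ℤ))
    (g := fun d => (m : ℤ) ^ d)
    {d : ℕ | d ∣ n} (fun a b hab hb => hab.trans hb)).mp ?_ n hn (dvd_refl n)
  · simp only [Int.cast_id] at key
    rw [Nat.sum_divisorsAntidiagonal
      (f := fun a b => ((ArithmeticFunction.moebius a : ℤ)) * (m : ℤ) ^ b)] at key
    have hL : (Nat.card {w : Fin n → Fin m // IsLyndon w} : ℤ) =
        ((Finset.univ.filter fun w : Fin n → Fin m => IsLyndon w).card : ℤ) := by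
      rw [Nat.card_eq_fintype_card, Fintype.card_subtype]
    rw [hL, ← Nat.cast_mul, ← LyndonCount.card_aperiodic hn]
    exact key.symm
  · intro d _ hd
    rw [← Nat.cast_sum, ← LyndonCount.card_fixed_eq_sum hn hd,
      LyndonCount.card_fixed hn hd, Nat.cast_pow]
end

section
/- For every n ≥ 1 and m ≥ 1, there exists a de Bruijn sequence of order n over an alphabet of size m: a cyclic sequence of length m^n in which every string of length n over the alphabet occurs exactly once as a (cyclic) substring. -/
set_option linter.unusedSectionVars false
set_option maxHeartbeats 1000000

open Finset

namespace DB

section Euler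
variable {V E : Type} [DecidableEq E] [DecidableEq V] [Fintype E]
variable (s t : E → V)

def CT (l : List E) : Prop :=
  l.Chain' (fun a b => t a = s b) ∧ ∀ x ∈ l.getLast?, ∀ y ∈ l.head?, t x = s y


/-- out-count of a vertex in an edge list -/
def outC (l : List E) (v : V) : ℕ := (l.filter (fun e => s e = v)).length
def inC (l : List E) (v : V) : ℕ := (l.filter (fun e => t e = v)).length

lemma outC_append (l₁ l₂ : List E) (v : V) :
    outC s (l₁ ++ l₂) v = outC s l₁ v + outC s l₂ v := by
  simp [outC, List.filter_append]

lemma inC_append (l₁ l₂ : List E) (v : V) :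
    inC t (l₁ ++ l₂) v = inC t l₁ v + inC t l₂ v := by
  simp [inC, List.filter_append]

/-- The key flow-counting lemma for trails. -/
lemma trail_count (l : List E) (hl : l ≠ []) (hc : l.Chain' (fun a b => t a = s b)) (v : V) :
    outC s l v + (if t (l.getLast hl) = v then 1 else 0)
      = inC t l v + (if s (l.head hl) = v then 1 else 0) := by
  induction l using List.reverseRecOn with
  | nil => exact absurd rfl hl
  | append_singleton l f ih =>
    rcases eq_or_ne l [] with rfl | hne
    · simp [outC, inC, List.filter]
      by_cases h1 : s f = v <;> by_cases h2 : t f = v <;> simp [h1, h2]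
    · have hc' : l.Chain' (fun a b => t a = s b) := (List.isChain_append.mp hc).1
      have hjun : t (l.getLast hne) = s f := by
        have := (List.isChain_append.mp hc).2.2
        exact this _ (by rw [List.getLast?_eq_getLast hne]; rfl) f rfl
      have IH := ih hne hc' 
      rw [outC_append, inC_append]
      have hlast : (l ++ [f]).getLast hl = f := by
        simp [List.getLast_append]
      have hhead : (l ++ [f]).head hl = l.head hne := by
        rcases l with _ | ⟨a, l⟩
        · exact absurd rfl hne
        · rfl
      rw [hlast, hhead, hjun] at *
      have h1 : outC s [f] v = if s f = v then 1 else 0 := by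
        simp [outC, List.filter]; by_cases h : s f = v <;> simp [h]
      have h2 : inC t [f] v = if t f = v then 1 else 0 := by
        simp [inC, List.filter]; by_cases h : t f = v <;> simp [h]
      rw [h1, h2]
      omega




lemma ct_rotate_one (l : List E) (h : CT s t l) : CT s t (l.rotate 1) := by
  rcases l with _ | ⟨a, r⟩
  · simpa using h
  rcases eq_or_ne r [] with rfl | hr
  · simpa using h
  have hrot : (a :: r).rotate 1 = r ++ [a] := by
    rw [List.rotate_cons_succ, List.rotate_zero]
  rw [hrot]
  obtain ⟨hc, hcl⟩ := h
  have hcr : r.Chain' (fun a b => t a = s b) := hc.tail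
  have hhead : t a = s (r.head hr) := by
    rcases r with _ | ⟨b, r'⟩
    · exact absurd rfl hr
    · exact List.isChain_cons_cons.mp hc |>.1
  constructor
  · refine List.isChain_append.mpr ?_
    refine ⟨hcr, List.isChain_singleton _, ?_⟩
    intro x hx y hy
    simp at hy; subst hy
    apply hcl
    · rw [List.getLast?_eq_getLast (by simp : a :: r ≠ [])]
      rw [List.getLast?_eq_getLast hr] at hx
      simp at hx
      rw [List.getLast_cons hr, hx]
      rfl
    · rfl
  · intro x hx y hy
    have hx' : x = a := by
      rw [List.getLast?_eq_getLast (l := r ++ [a]) (by simp)] at hx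
      simp [List.getLast_append] at hx
      exact hx.symm
    have hy' : y = r.head hr := by
      rw [List.head?_eq_head (by rcases r with _|_ <;> simp_all)] at hy
      simp at hy
      rw [← hy]
      rcases r with _ | ⟨b, r'⟩
      · exact absurd rfl hr
      · rfl
    subst hx' hy'
    exact hhead

lemma ct_rotate (l : List E) (h : CT s t l) (k : ℕ) : CT s t (l.rotate k) := by
  induction k with
  | zero => simpa using h
  | succ k ih =>
    have : l.rotate (k + 1) = (l.rotate k).rotate 1 := by
      rw [List.rotate_rotate]
    rw [this]
    exact ct_rotate_one s t _ ih

/-- every target vertex of an edge of a closed trail is a source vertex of an edge of it -/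
lemma ct_next (l : List E) (h : CT s t l) (e : E) (he : e ∈ l) :
    ∃ f ∈ l, t e = s f := by
  obtain ⟨i, hi⟩ := List.mem_iff_get.mp he
  rcases lt_or_ge ((i : ℕ) + 1) l.length with hlt | hge
  · refine ⟨l.get ⟨i + 1, hlt⟩, List.get_mem _ _, ?_⟩
    rw [← hi]
    exact List.isChain_iff_getElem.mp h.1 i (by omega)
  · -- i is the last index
    have hne : l ≠ [] := List.ne_nil_of_length_pos (lt_of_le_of_lt (Nat.zero_le _) i.2)
    have hival : (i : ℕ) = l.length - 1 := by have := i.2; omega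
    refine ⟨l.head hne, List.head_mem hne, ?_⟩
    have hlast : l.getLast hne = e := by
      rw [List.getLast_eq_getElem, ← hi]; show l.get ⟨l.length - 1, _⟩ = l.get i
      congr 1
      exact Fin.ext hival.symm
    have := h.2 (l.getLast hne) (by rw [List.getLast?_eq_getLast hne]; rfl)
      (l.head hne) (by rw [List.head?_eq_head hne]; rfl)
    rw [hlast] at this
    exact this




lemma stuck_closed (F : Finset E)
    (hbal : ∀ v, (F.filter (fun e => s e = v)).card = (F.filter (fun e => t e = v)).card)
    (p : List E) (hp : p ≠ []) (hnd : p.Nodup) (hsub : ∀ e ∈ p, e ∈ F)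
    (hc : p.Chain' (fun a b => t a = s b))
    (hstuck : ∀ f ∈ F, s f = t (p.getLast hp) → f ∈ p) :
    t (p.getLast hp) = s (p.head hp) := by
  set u := t (p.getLast hp) with hu
  by_contra hne
  have houtp : outC s p u = (F.filter (fun e => s e = u)).card := by
    unfold outC
    rw [← List.toFinset_card_of_nodup (hnd.filter _)]
    congr 1
    ext e
    simp only [List.toFinset_filter, Finset.mem_filter, List.mem_toFinset,
      decide_eq_true_eq]
    exact ⟨fun ⟨he, hse⟩ => ⟨hsub e he, hse⟩, fun ⟨he, hse⟩ => ⟨hstuck e he hse, hse⟩⟩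
  have hinp : inC t p u ≤ (F.filter (fun e => t e = u)).card := by
    unfold inC
    rw [← List.toFinset_card_of_nodup (hnd.filter _)]
    apply Finset.card_le_card
    intro e
    simp only [List.toFinset_filter, Finset.mem_filter, List.mem_toFinset,
      decide_eq_true_eq]
    exact fun ⟨he, hte⟩ => ⟨hsub e he, hte⟩
  have hcnt := trail_count s t p hp hc u
  rw [if_pos hu.symm, if_neg (fun h => hne h.symm)] at hcnt
  have := hbal u
  omega

/-- from a balanced edge set `F`, starting with any `e₀ ∈ F`, one can extract a
nonempty closed trail inside `F` starting with `e₀`. -/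
lemma exists_closed_trail (F : Finset E)
    (hbal : ∀ v, (F.filter (fun e => s e = v)).card = (F.filter (fun e => t e = v)).card)
    (e₀ : E) (he₀ : e₀ ∈ F) :
    ∃ C : List E, C ≠ [] ∧ C.Nodup ∧ (∀ e ∈ C, e ∈ F) ∧ CT s t C ∧ C.head? = some e₀ := by
  suffices H : ∀ k (p : List E) (hp : p ≠ []), p.Nodup → (∀ e ∈ p, e ∈ F) →
      p.Chain' (fun a b => t a = s b) → p.head hp = e₀ →
      (F \ p.toFinset).card ≤ k →
      ∃ C : List E, C ≠ [] ∧ C.Nodup ∧ (∀ e ∈ C, e ∈ F) ∧ CT s t C ∧ C.head? = some e₀ by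
    refine H (F \ [e₀].toFinset).card [e₀] (by simp) (by simp) (by simpa) (List.isChain_singleton _) rfl le_rfl
  intro k
  induction k with
  | zero =>
    intro p hp hnd hsub hc hhead hcard
    have hstuck : ∀ f ∈ F, s f = t (p.getLast hp) → f ∈ p := by
      intro f hf _
      by_contra hfp
      have : f ∈ F \ p.toFinset := by simp [hfp, hf]
      have := Finset.card_pos.mpr ⟨f, this⟩
      omega
    refine ⟨p, hp, hnd, hsub, ⟨hc, ?_⟩, by rw [List.head?_eq_head hp, hhead]⟩
    intro x hx y hy
    rw [List.getLast?_eq_getLast hp] at hx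
    rw [List.head?_eq_head hp] at hy
    simp at hx hy; subst hx; subst hy
    exact stuck_closed s t F hbal p hp hnd hsub hc hstuck
  | succ k ih =>
    intro p hp hnd hsub hc hhead hcard
    by_cases hext : ∃ f, f ∈ F ∧ f ∉ p ∧ t (p.getLast hp) = s f
    · obtain ⟨f, hfF, hfp, hcomp⟩ := hext
      have hp' : p ++ [f] ≠ [] := by simp
      refine ih (p ++ [f]) hp' ?_ ?_ ?_ ?_ ?_
      · rw [List.nodup_append]
        exact ⟨hnd, List.nodup_singleton f, by simpa using fun (a : E) (ha : a ∈ p) (h : a = f) => hfp (h ▸ ha)⟩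
      · intro e he
        rcases List.mem_append.mp he with h | h
        · exact hsub e h
        · simp at h; subst h; exact hfF
      · refine List.isChain_append.mpr ?_
        refine ⟨hc, List.isChain_singleton _, ?_⟩
        intro x hx y hy
        rw [List.getLast?_eq_getLast hp] at hx
        simp at hx hy; subst hx; subst hy
        exact hcomp
      · rcases p with _ | ⟨a, r⟩
        · exact absurd rfl hp
        · exact hhead
      · have hss : F \ (p ++ [f]).toFinset ⊆ (F \ p.toFinset).erase f := by
          intro e he
          simp only [Finset.mem_sdiff, List.toFinset_append, Finset.mem_union,
            List.mem_toFinset, not_or, Finset.mem_erase] at he ⊢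
          rcases he with ⟨heF, hep, hef⟩
          simp at hef
          exact ⟨hef, heF, hep⟩
        have h1 : ((F \ p.toFinset).erase f).card < (F \ p.toFinset).card := by
          apply Finset.card_erase_lt_of_mem
          simp [hfF, hfp]
        have := Finset.card_le_card hss
        omega
    · push_neg at hext
      have hstuck : ∀ f ∈ F, s f = t (p.getLast hp) → f ∈ p := by
        intro f hf hsf
        by_contra hfp
        exact absurd hsf.symm (hext f hf hfp)
      refine ⟨p, hp, hnd, hsub, ⟨hc, ?_⟩, by rw [List.head?_eq_head hp, hhead]⟩
      intro x hx y hy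
      rw [List.getLast?_eq_getLast hp] at hx
      rw [List.head?_eq_head hp] at hy
      simp at hx hy; subst hx; subst hy
      exact stuck_closed s t F hbal p hp hnd hsub hc hstuck




lemma ct_balanced (l : List E) (hl : l ≠ []) (h : CT s t l) (v : V) :
    outC s l v = inC t l v := by
  have hcnt := trail_count s t l hl h.1 v
  have hcl : t (l.getLast hl) = s (l.head hl) :=
    h.2 _ (by rw [List.getLast?_eq_getLast hl]; rfl) _ (by rw [List.head?_eq_head hl]; rfl)
  rw [hcl] at hcnt
  omega

/-- complement of a closed trail stays balanced -/
lemma compl_balanced (hbal : ∀ v, ((univ : Finset E).filter (fun e => s e = v)).card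
      = ((univ : Finset E).filter (fun e => t e = v)).card)
    (T : List E) (hT : T ≠ []) (hnd : T.Nodup) (hct : CT s t T) (v : V) :
    (((univ : Finset E) \ T.toFinset).filter (fun e => s e = v)).card
      = (((univ : Finset E) \ T.toFinset).filter (fun e => t e = v)).card := by
  have key : ∀ (P : E → Prop) [DecidablePred P],
      (((univ : Finset E) \ T.toFinset).filter P).card + (T.toFinset.filter P).card
        = ((univ : Finset E).filter P).card := by
    intro P _
    rw [← Finset.card_union_of_disjoint]
    · congr 1
      ext e
      simp only [Finset.mem_union, Finset.mem_filter, Finset.mem_sdiff, Finset.mem_univ,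
        List.mem_toFinset, true_and]
      tauto
    · intro a ha hb
      simp only [Finset.le_eq_subset, Finset.subset_iff] at *
      intro x hx
      have h1 := ha hx
      have h2 := hb hx
      simp only [Finset.mem_filter, Finset.mem_sdiff, List.mem_toFinset] at h1 h2
      exact absurd h2.1 h1.1.2
  have k1 := key (fun e => s e = v)
  have k2 := key (fun e => t e = v)
  have e1 : (T.toFinset.filter (fun e => s e = v)).card = outC s T v := by
    unfold outC
    rw [← List.toFinset_card_of_nodup (hnd.filter _)]
    congr 1
    ext e
    simp [List.toFinset_filter]
  have e2 : (T.toFinset.filter (fun e => t e = v)).card = inC t T v := by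
    unfold inC
    rw [← List.toFinset_card_of_nodup (hnd.filter _)]
    congr 1
    ext e
    simp [List.toFinset_filter]
  have := ct_balanced s t T hT hct v
  have := hbal v
  omega

theorem euler [Nonempty E]
    (hbal : ∀ v, ((univ : Finset E).filter (fun e => s e = v)).card
      = ((univ : Finset E).filter (fun e => t e = v)).card)
    (hconn : ∀ S : Finset V, S.Nonempty → (∀ e, s e ∈ S → t e ∈ S) → ∀ v, v ∈ S) :
    ∃ l : List E, l ≠ [] ∧ l.Nodup ∧ (∀ e, e ∈ l) ∧ CT s t l := by
  suffices H : ∀ k (T : List E), T ≠ [] → T.Nodup → CT s t T →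
      ((univ : Finset E) \ T.toFinset).card ≤ k →
      ∃ l : List E, l ≠ [] ∧ l.Nodup ∧ (∀ e, e ∈ l) ∧ CT s t l by
    obtain ⟨e₀⟩ := ‹Nonempty E›
    obtain ⟨C, hC1, hC2, _, hC4, _⟩ :=
      exists_closed_trail s t univ hbal e₀ (Finset.mem_univ _)
    exact H _ C hC1 hC2 hC4 le_rfl
  intro k
  induction k with
  | zero =>
    intro T hT hnd hct hcard
    refine ⟨T, hT, hnd, ?_, hct⟩
    intro e
    by_contra he
    have : e ∈ (univ : Finset E) \ T.toFinset := by simp [he]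
    have := Finset.card_pos.mpr ⟨e, this⟩
    omega
  | succ k ih =>
    intro T hT hnd hct hcard
    by_cases hdone : ∀ e, e ∈ T
    · exact ⟨T, hT, hnd, hdone, hct⟩
    -- find an unused edge leaving a vertex of T
    have hfind : ∃ f, f ∉ T ∧ ∃ a ∈ T, s f = s a := by
      by_contra hno
      push_neg at hno
      set S : Finset V := (T.map s).toFinset with hS
      have hSne : S.Nonempty := by
        rcases T with _ | ⟨a, r⟩
        · exact absurd rfl hT
        · exact ⟨s a, by simp [hS]⟩
      have hScl : ∀ e, s e ∈ S → t e ∈ S := by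
        intro e hse
        by_cases heT : e ∈ T
        · obtain ⟨f, hf, hef⟩ := ct_next s t T hct e heT
          rw [hef]
          simp [hS]
          exact ⟨f, hf, rfl⟩
        · simp only [hS, List.mem_toFinset, List.mem_map] at hse
          obtain ⟨a, ha, hsa⟩ := hse
          exact absurd hsa.symm (hno e heT a ha)
      push_neg at hdone
      obtain ⟨f, hf⟩ := hdone
      have := hconn S hSne hScl (s f)
      simp only [hS, List.mem_toFinset, List.mem_map] at this
      obtain ⟨a, ha, hsa⟩ := this
      exact absurd hsa.symm (hno f hf a ha)
    obtain ⟨f, hfT, a, haT, hsf⟩ := hfind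
    -- index of a in T
    obtain ⟨i, hi⟩ := List.mem_iff_get.mp haT
    -- extract a closed trail through f from the unused edges
    obtain ⟨F, hF⟩ : ∃ F, F = (univ : Finset E) \ T.toFinset := ⟨_, rfl⟩
    have hFbal := compl_balanced s t hbal T hT hnd hct
    have hfF : f ∈ F := by simp [hF, hfT]
    obtain ⟨C, hC1, hC2, hC3, hC4, hC5⟩ := exists_closed_trail s t F (hF ▸ hFbal) f hfF
    -- rotate T to start at a
    obtain ⟨T', hT'⟩ : ∃ T', T' = T.rotate i := ⟨_, rfl⟩
    have hT'ct : CT s t T' := hT' ▸ ct_rotate s t T hct i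
    have hT'perm : T'.Perm T := hT' ▸ List.rotate_perm T i
    have hT'ne : T' ≠ [] := fun h => hT (List.Perm.eq_nil (h ▸ hT'perm).symm ▸ rfl)
    have hT'head : T'.head hT'ne = a := by
      have h0 : 0 < T'.length := List.length_pos_iff.mpr hT'ne
      have hhg : T'.head hT'ne = T'.get ⟨0, h0⟩ := by
        rcases T' with _ | ⟨b, r⟩
        · exact absurd rfl hT'ne
        · simp
      rw [hhg]
      subst hT'
      rw [List.get_rotate, ← hi]
      congr 1
      apply Fin.ext
      simp [Nat.mod_eq_of_lt i.2]
    -- splice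
    obtain ⟨L, hL⟩ : ∃ L, L = C ++ T' := ⟨_, rfl⟩
    have hLne : L ≠ [] := by simp [hL, hC1]
    have hCf : C.head hC1 = f := by
      rw [List.head?_eq_head hC1] at hC5
      exact Option.some_inj.mp hC5
    have hdisj : ∀ e ∈ C, e ∉ T' := by
      intro e he heT'
      have := hC3 e he
      simp [hF] at this
      exact this (hT'perm.mem_iff.mp heT')
    have hLnd : L.Nodup := by
      rw [hL, List.nodup_append]
      exact ⟨hC2, hT'perm.nodup_iff.mpr hnd, fun a ha b hb hab => hdisj a ha (hab ▸ hb)⟩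
    have hCclosed : t (C.getLast hC1) = s (C.head hC1) :=
      hC4.2 _ (by rw [List.getLast?_eq_getLast hC1]; rfl) _ (by rw [List.head?_eq_head hC1]; rfl)
    have hT'closed : t (T'.getLast hT'ne) = s (T'.head hT'ne) :=
      hT'ct.2 _ (by rw [List.getLast?_eq_getLast hT'ne]; rfl) _
        (by rw [List.head?_eq_head hT'ne]; rfl)
    have hLct : CT s t L := by
      constructor
      · rw [hL]; refine List.isChain_append.mpr ?_
        refine ⟨hC4.1, hT'ct.1, ?_⟩
        intro x hx y hy
        rw [List.getLast?_eq_getLast hC1] at hx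
        rw [List.head?_eq_head hT'ne] at hy
        simp at hx hy; subst hx; subst hy
        rw [hCclosed, hCf, hsf, ← hT'head]
      · intro x hx y hy
        have hxL : x = T'.getLast hT'ne := by
          rw [hL] at hx
          rw [List.getLast?_append_of_ne_nil hT'ne (l₁ := C),
            List.getLast?_eq_getLast hT'ne] at hx
          simpa using hx.symm
        have hyL : y = C.head hC1 := by
          rw [hL, List.head?_append_of_ne_nil _ hC1, List.head?_eq_head hC1] at hy
          simpa using hy.symm
        subst hxL hyL
        rw [hT'closed, hT'head, hCf, hsf]
    -- recurse
    refine ih L hLne hLnd hLct ?_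
    have hss : (univ : Finset E) \ L.toFinset ⊆ ((univ : Finset E) \ T.toFinset).erase f := by
      intro e he
      simp only [Finset.mem_sdiff, Finset.mem_univ, true_and, List.mem_toFinset,
        Finset.mem_erase, hL, List.mem_append, not_or] at he ⊢
      refine ⟨?_, fun heT => he.2 (hT'perm.mem_iff.mpr heT)⟩
      rintro rfl
      exact he.1 (by rw [← hCf]; exact List.head_mem hC1)
    have h1 : (((univ : Finset E) \ T.toFinset).erase f).card
        < ((univ : Finset E) \ T.toFinset).card := by
      apply Finset.card_erase_lt_of_mem
      simp [hfT]
    have h2 := Finset.card_le_card hss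
    rw [← hF] at h1 h2 hcard
    omega


end Euler

section Graph


variable (d m : ℕ)

def src (e : Fin (d+1) → Fin m) : Fin d → Fin m := fun k => e k.castSucc
def tgt (e : Fin (d+1) → Fin m) : Fin d → Fin m := fun k => e k.succ

def srcEquiv (v : Fin d → Fin m) : {e : Fin (d+1) → Fin m // src d m e = v} ≃ Fin m where
  toFun e := e.1 (Fin.last d)
  invFun a := ⟨fun k => if h : (k : ℕ) < d then v ⟨k, h⟩ else a, by
    funext k
    show (if h : ((Fin.castSucc k : Fin (d+1)) : ℕ) < d
      then v ⟨((Fin.castSucc k : Fin (d+1)) : ℕ), h⟩ else a) = v k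
    rw [dif_pos (by exact k.isLt)]
    exact congrArg v (Fin.ext rfl)⟩
  left_inv := by
    rintro ⟨e, he⟩
    apply Subtype.ext
    funext k
    show (if h : (k : ℕ) < d then v ⟨(k : ℕ), h⟩ else e (Fin.last d)) = e k
    by_cases h : (k : ℕ) < d
    · rw [dif_pos h]
      have h1 : e (Fin.castSucc ⟨(k : ℕ), h⟩) = v ⟨(k : ℕ), h⟩ := congrFun he ⟨(k : ℕ), h⟩
      have h2 : Fin.castSucc ⟨(k : ℕ), h⟩ = k := Fin.ext rfl
      rw [← h1, h2]
    · rw [dif_neg h]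
      have h2 : Fin.last d = k := Fin.ext (by have := k.isLt; simp only [Fin.val_last]; omega)
      rw [h2]
  right_inv := by
    intro a
    show (if h : ((Fin.last d : Fin (d+1)) : ℕ) < d then v ⟨_, h⟩ else a) = a
    rw [dif_neg (by simp)]

def tgtEquiv (v : Fin d → Fin m) : {e : Fin (d+1) → Fin m // tgt d m e = v} ≃ Fin m where
  toFun e := e.1 0
  invFun a := ⟨fun k => if h : 0 < (k : ℕ) then v ⟨(k : ℕ) - 1, by have := k.isLt; omega⟩
      else a, by
    funext k
    show (if h : 0 < ((Fin.succ k : Fin (d+1)) : ℕ)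
      then v ⟨((Fin.succ k : Fin (d+1)) : ℕ) - 1, by have := (Fin.succ k).isLt; omega⟩ else a)
      = v k
    rw [dif_pos (by simp : 0 < ((Fin.succ k : Fin (d+1)) : ℕ))]
    exact congrArg v (Fin.ext rfl)⟩
  left_inv := by
    rintro ⟨e, he⟩
    apply Subtype.ext
    funext k
    show (if h : 0 < (k : ℕ) then v ⟨(k : ℕ) - 1, by have := k.isLt; omega⟩ else e 0) = e k
    by_cases h : 0 < (k : ℕ)
    · rw [dif_pos h]
      have hlt : (k : ℕ) - 1 < d := by have := k.isLt; omega
      have h1 : e (Fin.succ ⟨(k : ℕ) - 1, hlt⟩) = v ⟨(k : ℕ) - 1, hlt⟩ :=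
        congrFun he ⟨(k : ℕ) - 1, hlt⟩
      have h2 : Fin.succ ⟨(k : ℕ) - 1, hlt⟩ = k := Fin.ext (by simp only [Fin.val_succ]; omega)
      rw [← h1, h2]
    · rw [dif_neg h]
      have h2 : (0 : Fin (d+1)) = k := Fin.ext (by simp only [Fin.val_zero]; omega)
      rw [h2]
  right_inv := by
    intro a
    show (if h : 0 < ((0 : Fin (d+1)) : ℕ) then v ⟨((0 : Fin (d+1)) : ℕ) - 1, by simp at h⟩
      else a) = a
    rw [dif_neg (by simp)]

lemma deBruijn_balanced (v : Fin d → Fin m) :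
    ((univ : Finset (Fin (d+1) → Fin m)).filter (fun e => src d m e = v)).card
      = ((univ : Finset (Fin (d+1) → Fin m)).filter (fun e => tgt d m e = v)).card := by
  rw [← Fintype.card_subtype, ← Fintype.card_subtype,
    Fintype.card_congr (srcEquiv d m v), Fintype.card_congr (tgtEquiv d m v)]

lemma deBruijn_connected (hm : 1 ≤ m) (S : Finset (Fin d → Fin m)) (hne : S.Nonempty)
    (hcl : ∀ e : Fin (d+1) → Fin m, src d m e ∈ S → tgt d m e ∈ S) :
    ∀ v, v ∈ S := by
  intro v
  obtain ⟨u, hu⟩ := hne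
  have z : Fin m := ⟨0, hm⟩
  set A : (Fin d → Fin m) → Fin m → (Fin d → Fin m) :=
    fun x a k => if h : (k : ℕ) + 1 < d then x ⟨(k : ℕ) + 1, h⟩ else a with hA
  have hstep : ∀ x a, x ∈ S → A x a ∈ S := by
    intro x a hx
    have key := hcl (fun k => if h : (k : ℕ) < d then x ⟨k, h⟩ else a) ?_
    · have : tgt d m (fun k => if h : (k : ℕ) < d then x ⟨k, h⟩ else a) = A x a := by
        funext k
        show (if h : ((Fin.succ k : Fin (d+1)) : ℕ) < d then x ⟨((Fin.succ k : Fin (d+1)) : ℕ), h⟩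
          else a) = if h : (k : ℕ) + 1 < d then x ⟨(k : ℕ) + 1, h⟩ else a
        rfl
      rw [this] at key
      exact key
    · have : src d m (fun k => if h : (k : ℕ) < d then x ⟨k, h⟩ else a) = x := by
        funext k
        show (if h : ((Fin.castSucc k : Fin (d+1)) : ℕ) < d
          then x ⟨((Fin.castSucc k : Fin (d+1)) : ℕ), h⟩ else a) = x k
        rw [dif_pos (by exact k.isLt)]
        exact congrArg x (Fin.ext rfl)
      rw [this]
      exact hx
  set x : ℕ → (Fin d → Fin m) := fun i => Nat.rec u
    (fun i xi => A xi (if h : i < d then v ⟨i, h⟩ else z)) i with hx'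
  have hmem : ∀ i, x i ∈ S := by
    intro i
    induction i with
    | zero => exact hu
    | succ i ih => exact hstep _ _ ih
  have hform : ∀ i, ∀ hile : i ≤ d, ∀ k : Fin d,
      x i k = if h : d ≤ (k : ℕ) + i then v ⟨(k : ℕ) + i - d, by have := k.isLt; omega⟩
        else u ⟨(k : ℕ) + i, by have := k.isLt; omega⟩ := by
    intro i
    induction i with
    | zero =>
      intro _ k
      rw [dif_neg (by have := k.isLt; omega)]
      show u k = _
      exact congrArg u (Fin.ext (by simp))
    | succ i ih =>
      intro hle k
      have hid : i < d := by omega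
      have hxi : x (i + 1) k = A (x i) (v ⟨i, hid⟩) k := by
        show A (x i) (if h : i < d then v ⟨i, h⟩ else z) k = _
        rw [dif_pos hid]
      rw [hxi]
      show (if h : (k : ℕ) + 1 < d then x i ⟨(k : ℕ) + 1, h⟩ else v ⟨i, hid⟩) = _
      by_cases h : (k : ℕ) + 1 < d
      · rw [dif_pos h, ih (by omega) ⟨(k : ℕ) + 1, h⟩]
        by_cases h2 : d ≤ (k : ℕ) + 1 + i
        · rw [dif_pos h2, dif_pos (show d ≤ (k : ℕ) + (i + 1) by omega)]
          exact congrArg v (Fin.ext (by show (k : ℕ) + 1 + i - d = (k : ℕ) + (i + 1) - d; omega))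
        · rw [dif_neg h2, dif_neg (show ¬ d ≤ (k : ℕ) + (i + 1) by omega)]
          exact congrArg u (Fin.ext (by show (k : ℕ) + 1 + i = (k : ℕ) + (i + 1); omega))
      · rw [dif_neg h, dif_pos (show d ≤ (k : ℕ) + (i + 1) by have := k.isLt; omega)]
        exact congrArg v (Fin.ext (by show (i : ℕ) = (k : ℕ) + (i + 1) - d; have := k.isLt; omega))
  have hv : x d = v := by
    funext k
    rw [hform d le_rfl k, dif_pos (by omega)]
    exact congrArg v (Fin.ext (by show (k : ℕ) + d - d = (k : ℕ); omega))
  rw [← hv]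
  exact hmem d


end Graph

end DB


/-- For every `n ≥ 1`, `m ≥ 1`, there exists a de Bruijn sequence of order `n` over an
alphabet of size `m`: a cyclic sequence of length `m^n` in which every length-`n`
string occurs exactly once as a cyclic substring. -/
theorem deBruijn_exists (n m : ℕ) (hn : 1 ≤ n) (hm : 1 ≤ m) :
    ∃ s : ZMod (m ^ n) → Fin m, ∀ w : Fin n → Fin m,
      ∃! i : ZMod (m ^ n), ∀ k : Fin n, s (i + (k.val : ZMod (m ^ n))) = w k := by
  obtain ⟨d, rfl⟩ : ∃ d, n = d + 1 := ⟨n - 1, by omega⟩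
  haveI : NeZero (m ^ (d + 1)) := ⟨by positivity⟩
  haveI : Nonempty (Fin m) := ⟨⟨0, hm⟩⟩
  obtain ⟨l, hlne, hlnd, hlall, hlct⟩ :=
    DB.euler (DB.src d m) (DB.tgt d m) (DB.deBruijn_balanced d m) (DB.deBruijn_connected d m hm)
  have hlen : l.length = m ^ (d + 1) := by
    have h1 : l.toFinset = (univ : Finset (Fin (d+1) → Fin m)) := by
      ext e; simp [hlall e]
    have h2 := List.toFinset_card_of_nodup hlnd
    rw [h1] at h2
    rw [← h2, Finset.card_univ, Fintype.card_fun, Fintype.card_fin, Fintype.card_fin]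
  set N := m ^ (d + 1) with hN
  -- the cyclic sequence of edges
  have hget : ∀ i : ZMod N, i.val < l.length := fun i => by rw [hlen]; exact ZMod.val_lt i
  set e : ZMod N → (Fin (d+1) → Fin m) := fun i => l.get ⟨i.val, hget i⟩ with he
  have hval : ∀ (i : ZMod N) (j : ℕ), (i + (j : ZMod N)).val = (i.val + j) % N := by
    intro i j
    rw [ZMod.val_add, ZMod.val_natCast, Nat.add_mod i.val j N,
      Nat.mod_eq_of_lt (ZMod.val_lt i)]
  -- the cyclic successor property
  have hstep : ∀ i : ZMod N, DB.tgt d m (e i) = DB.src d m (e (i + ((1 : ℕ) : ZMod N))) := by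
    intro i
    have hv : (i + ((1 : ℕ) : ZMod N)).val = (i.val + 1) % N := hval i 1
    rcases lt_or_ge (i.val + 1) N with hlt | hge
    · have hv' : (i + ((1 : ℕ) : ZMod N)).val = i.val + 1 := by
        rw [hv, Nat.mod_eq_of_lt hlt]
      have hchain := List.isChain_iff_getElem.mp hlct.1 i.val (by rw [hlen]; omega)
      have h1 : e i = l.get ⟨i.val, hget i⟩ := rfl
      have h2 : e (i + ((1 : ℕ) : ZMod N)) = l.get ⟨i.val + 1, by rw [hlen]; omega⟩ := by
        rw [he]
        exact congrArg l.get (Fin.ext hv')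
      rw [h1, h2]
      exact hchain
    · have hN1 : i.val = N - 1 := by have := ZMod.val_lt i; omega
      have hv' : (i + ((1 : ℕ) : ZMod N)).val = 0 := by
        rw [hv, hN1]
        have hN0 : 0 < N := Nat.pos_of_ne_zero (NeZero.ne N)
        rw [show N - 1 + 1 = N by omega, Nat.mod_self]
      have h1 : e i = l.getLast hlne := by
        rw [he, List.getLast_eq_getElem]
        exact congrArg l.get (Fin.ext (by show i.val = l.length - 1; omega))
      have h2 : e (i + ((1 : ℕ) : ZMod N)) = l.head hlne := by
        rw [he]
        have : l.head hlne = l.get ⟨0, List.length_pos_iff.mpr hlne⟩ := by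
          rcases l with _ | ⟨a, r⟩
          · exact absurd rfl hlne
          · simp
        rw [this]
        exact congrArg l.get (Fin.ext hv')
      rw [h1, h2]
      exact hlct.2 _ (by rw [List.getLast?_eq_getLast hlne]; rfl) _
        (by rw [List.head?_eq_head hlne]; rfl)
  -- the window property
  have hwin : ∀ (k : ℕ) (hk : k < d + 1) (i : ZMod N),
      e i ⟨k, hk⟩ = e (i + ((k : ℕ) : ZMod N)) ⟨0, Nat.succ_pos d⟩ := by
    intro k
    induction k with
    | zero =>
      intro hk i
      rw [Nat.cast_zero, add_zero]
    | succ k ih =>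
      intro hk i
      have hkd : k < d := by omega
      have hc := congrFun (hstep i) ⟨k, hkd⟩
      have h1 : Fin.succ (⟨k, hkd⟩ : Fin d) = ⟨k + 1, hk⟩ := Fin.ext rfl
      have h2 : Fin.castSucc (⟨k, hkd⟩ : Fin d) = ⟨k, by omega⟩ := Fin.ext rfl
      rw [DB.tgt, DB.src, h1, h2] at hc
      rw [hc, ih (by omega) (i + ((1 : ℕ) : ZMod N))]
      congr 1
      push_cast
      ring
  -- injectivity of the edge enumeration
  have hinj : Function.Injective e := by
    intro i j hij
    have h3 : (⟨i.val, hget i⟩ : Fin l.length) = ⟨j.val, hget j⟩ :=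
      List.nodup_iff_injective_get.mp hlnd hij
    exact ZMod.val_injective N (congrArg Fin.val h3)
  -- conclusion
  refine ⟨fun i => e i ⟨0, Nat.succ_pos d⟩, ?_⟩
  intro w
  obtain ⟨iw, hiw⟩ := List.mem_iff_get.mp (hlall w)
  have hiwN : (iw : ℕ) < N := by rw [← hlen]; exact iw.2
  have hiv : (((iw : ℕ) : ZMod N)).val = (iw : ℕ) := by
    rw [ZMod.val_natCast, Nat.mod_eq_of_lt hiwN]
  have hei : e ((iw : ℕ) : ZMod N) = w := by
    rw [he, ← hiw]
    exact congrArg l.get (Fin.ext hiv)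
  refine ⟨((iw : ℕ) : ZMod N), ?_, ?_⟩
  · intro k
    show e (((iw : ℕ) : ZMod N) + ((k.val : ℕ) : ZMod N)) ⟨0, Nat.succ_pos d⟩ = w k
    rw [← hwin k.val k.isLt, hei]
  · intro j hj
    apply hinj
    rw [hei]
    funext k
    have hthis : e (j + ((k.val : ℕ) : ZMod N)) ⟨0, Nat.succ_pos d⟩ = w k := hj k
    rw [← hwin k.val k.isLt j] at hthis
    rw [← hthis]
end

section
/- The number of necklaces of length n and type i = (i_1,...,i_m) (with i_1+⋯+i_m = n) equals (1/n) * Σ_{d | gcd(i_1,...,i_m,n)} φ(d) * (n/d)! / ((i_1/d)! ⋯ (i_m/d)!). -/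
namespace Necklace

variable {m n : ℕ}

def shift (a : ℕ) (w : Fin n → Fin m) : Fin n → Fin m :=
  fun k => w ⟨(k.val + a) % n, Nat.mod_lt _ k.pos⟩

open Fin.NatCast in
lemma shift_apply_fin [NeZero n] (a : ℕ) (w : Fin n → Fin m) (k : Fin n) :
    shift a w k = w (k + (a : Fin n)) := by
  have : (k + (a : Fin n)) = ⟨(k.val + a) % n, Nat.mod_lt _ k.pos⟩ := by
    rw [Fin.add_def]
    congr 1
    rw [Fin.val_natCast, Nat.add_mod, Nat.mod_mod_of_dvd a dvd_rfl, ← Nat.add_mod]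
  rw [this]; rfl

lemma shift_shift (a b : ℕ) (w : Fin n → Fin m) : shift a (shift b w) = shift (a + b) w := by
  funext k
  show w ⟨((k.val + a) % n + b) % n, _⟩ = w ⟨(k.val + (a + b)) % n, _⟩
  congr 1
  apply Fin.ext
  show ((k.val + a) % n + b) % n = (k.val + (a + b)) % n
  rw [Nat.mod_add_mod, Nat.add_assoc]

lemma shift_zero (w : Fin n → Fin m) : shift 0 w = w := by
  funext k
  show w ⟨(k.val + 0) % n, _⟩ = w k
  congr 1
  apply Fin.ext
  show (k.val + 0) % n = k.val
  rw [Nat.add_zero, Nat.mod_eq_of_lt k.isLt]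

lemma shift_mod (a : ℕ) (w : Fin n → Fin m) : shift (a % n) w = shift a w := by
  funext k
  show w ⟨(k.val + a % n) % n, _⟩ = w ⟨(k.val + a) % n, _⟩
  congr 1
  apply Fin.ext
  show (k.val + a % n) % n = (k.val + a) % n
  rw [Nat.add_mod, Nat.mod_mod_of_dvd a dvd_rfl, ← Nat.add_mod]

lemma shift_self (w : Fin n → Fin m) : shift n w = w := by
  rw [← shift_mod, Nat.mod_self, shift_zero]

lemma rot_eq_shift (w : Fin n → Fin m) : rot w = shift 1 w := rfl

lemma rot_iterate (j : ℕ) (w : Fin n → Fin m) : rot^[j] w = shift j w := by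
  induction j generalizing w with
  | zero => simp [shift_zero]
  | succ j ih =>
      rw [Function.iterate_succ_apply, rot_eq_shift, ih, shift_shift, Nat.add_comm]

lemma shift_mul (a : ℕ) {w : Fin n → Fin m} (h : shift a w = w) (t : ℕ) :
    shift (t * a) w = w := by
  induction t with
  | zero => simpa using shift_zero w
  | succ t ih => rw [Nat.succ_mul, ← shift_shift, h, ih]

lemma shift_gcd {a : ℕ} (ha : a < n) {w : Fin n → Fin m} (h : shift a w = w) :
    shift (Nat.gcd a n) w = w := by
  rcases Nat.eq_zero_or_pos a with rfl | hapos
  · rw [Nat.gcd_zero_left]; exact shift_self w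
  · have hlt : Nat.gcd a n < n := lt_of_le_of_lt (Nat.le_of_dvd hapos (Nat.gcd_dvd_left a n)) ha
    obtain ⟨t, -, ht⟩ := Nat.exists_mul_mod_eq_gcd hlt
    rw [← ht, shift_mod, Nat.mul_comm]
    exact shift_mul a h t

lemma shift_of_dvd {d a : ℕ} (hda : d ∣ a) {w : Fin n → Fin m} (h : shift d w = w) :
    shift a w = w := by
  obtain ⟨c, rfl⟩ := hda
  rw [Nat.mul_comm]
  exact shift_mul d h c

lemma shift_iff_gcd {a : ℕ} (ha : a < n) (w : Fin n → Fin m) :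
    shift a w = w ↔ shift (Nat.gcd a n) w = w :=
  ⟨shift_gcd ha, fun h => shift_of_dvd (Nat.gcd_dvd_left a n) h⟩

section Block

variable {d : ℕ} (hd : 0 < d) (hdn : d ∣ n)

include hd hdn in
lemma periodic_aux {w : Fin n → Fin m} (h : shift d w = w) (k : Fin n) :
    w k = w ⟨k.val % d, lt_of_lt_of_le (Nat.mod_lt _ hd) (Nat.le_of_dvd k.pos hdn)⟩ := by
  have hdle : d ≤ n := Nat.le_of_dvd k.pos hdn
  rcases k with ⟨v, hv⟩
  induction v using Nat.strong_induction_on with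
  | _ v IH =>
    by_cases hvd : v < d
    · congr 1
      exact (Fin.ext (Nat.mod_eq_of_lt hvd)).symm
    · push_neg at hvd
      have hsub : v - d < n := lt_of_le_of_lt (Nat.sub_le _ _) hv
      have h1 : w ⟨v, hv⟩ = w ⟨v - d, hsub⟩ := by
        have h2 : shift d w ⟨v - d, hsub⟩ = w ⟨v - d, hsub⟩ := congrFun h _
        have h3 : shift d w ⟨v - d, hsub⟩ = w ⟨v, hv⟩ := by
          show w ⟨(v - d + d) % n, _⟩ = w ⟨v, hv⟩
          congr 1
          exact Fin.ext (by simp [Nat.sub_add_cancel hvd, Nat.mod_eq_of_lt hv])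
        rw [← h3, h2]
      rw [h1, IH (v - d) (by omega) hsub]
      congr 1
      exact Fin.ext (by simp [(Nat.mod_eq_sub_mod hvd).symm])

/-- periodic extension of a block -/
def pExt (hd : 0 < d) (b : Fin d → Fin m) : Fin n → Fin m :=
  fun k => b ⟨k.val % d, Nat.mod_lt _ hd⟩

include hdn in
lemma shift_pExt (b : Fin d → Fin m) : shift d (pExt (n := n) hd b) = pExt (n := n) hd b := by
  funext k
  show b ⟨((k.val + d) % n) % d, _⟩ = b ⟨k.val % d, _⟩
  congr 1
  apply Fin.ext
  show ((k.val + d) % n) % d = k.val % d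
  rw [Nat.mod_mod_of_dvd _ hdn, Nat.add_mod_right]

/-- The fixed points of `shift d` are in bijection with blocks of length `d`. -/
def blockEquiv (hn : 0 < n) : {w : Fin n → Fin m // shift d w = w} ≃ (Fin d → Fin m) where
  toFun w := fun t => w.1 ⟨t.val, lt_of_lt_of_le t.isLt (Nat.le_of_dvd hn hdn)⟩
  invFun b := ⟨pExt hd b, shift_pExt hd hdn b⟩
  left_inv := by
    rintro ⟨w, hw⟩
    apply Subtype.ext
    funext k
    show w ⟨k.val % d, _⟩ = w k
    exact (periodic_aux hd hdn hw k).symm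
  right_inv := by
    intro b
    funext t
    show b ⟨t.val % d, _⟩ = b t
    congr 1
    exact Fin.ext (Nat.mod_eq_of_lt t.isLt)

include hd hdn in
lemma card_fiber_pExt (b : Fin d → Fin m) (l : Fin m) :
    Nat.card {k : Fin n // pExt (n := n) hd b k = l} =
      (n / d) * Nat.card {t : Fin d // b t = l} := by
  have e : {k : Fin n // pExt (n := n) hd b k = l} ≃ (Fin (n / d) × {t : Fin d // b t = l}) := by
    refine ⟨fun k => (⟨k.1.val / d, Nat.div_lt_div_of_lt_of_dvd hdn k.1.isLt⟩, ⟨⟨k.1.val % d, Nat.mod_lt _ hd⟩, k.2⟩),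
      fun p => ⟨⟨p.1.val * d + p.2.1.val, ?_⟩, ?_⟩, ?_, ?_⟩
    · calc p.1.val * d + p.2.1.val < p.1.val * d + d := by
            exact Nat.add_lt_add_left p.2.1.isLt _
        _ = (p.1.val + 1) * d := by ring
        _ ≤ (n / d) * d := Nat.mul_le_mul_right d p.1.isLt
        _ = n := Nat.div_mul_cancel hdn
    · show b ⟨(p.1.val * d + p.2.1.val) % d, _⟩ = l
      have : (p.1.val * d + p.2.1.val) % d = p.2.1.val := by
        rw [Nat.mul_comm, Nat.mul_add_mod, Nat.mod_eq_of_lt p.2.1.isLt]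
      convert p.2.2 using 2
      exact Fin.ext this
    · rintro ⟨k, hk⟩
      apply Subtype.ext
      apply Fin.ext
      show (k.val / d) * d + k.val % d = k.val
      rw [Nat.mul_comm]
      exact Nat.div_add_mod k.val d
    · rintro ⟨q, ⟨t, ht⟩⟩
      have h1 : (q.val * d + t.val) / d = q.val := by
        rw [Nat.mul_comm, Nat.mul_add_div hd, Nat.div_eq_of_lt t.isLt, Nat.add_zero]
      have h2 : (q.val * d + t.val) % d = t.val := by
        rw [Nat.mul_comm, Nat.mul_add_mod, Nat.mod_eq_of_lt t.isLt]
      ext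
      · exact h1
      · exact h2
  rw [Nat.card_congr e, Nat.card_prod, Nat.card_eq_fintype_card, Fintype.card_fin]

end Block

open Finset Equiv
open scoped Nat

/-- Fiber of `Sigma.fst`. -/
def sigmaFstFiber {ι : Type*} {β : ι → Type*} (j : ι) : {p : Σ i, β i // p.1 = j} ≃ β j where
  toFun p := p.2 ▸ p.1.2
  invFun x := ⟨⟨j, x⟩, rfl⟩
  left_inv := by rintro ⟨⟨j', x⟩, rfl⟩; rfl
  right_inv x := rfl

/-- The number of functions `Fin N → Fin m` with prescribed fiber cardinalities
is the multinomial coefficient. -/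
lemma card_typed (N m : ℕ) (i : Fin m → ℕ) (hi : ∑ j, i j = N) :
    Nat.card {w : Fin N → Fin m // ∀ j, Nat.card {k : Fin N // w k = j} = i j} =
      Nat.multinomial Finset.univ i := by
  classical
  have hcard : Fintype.card (Σ j : Fin m, Fin (i j)) = Fintype.card (Fin N) := by
    simp [hi]
  set e : (Σ j : Fin m, Fin (i j)) ≃ Fin N := Fintype.equivOfCardEq hcard with he
  set w₀ : Fin N → Fin m := fun k => (e.symm k).1 with hw₀def
  have hw₀ : ∀ j, Nat.card {k : Fin N // w₀ k = j} = i j := by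
    intro j
    have e1 : {p : (Σ j', Fin (i j')) // p.1 = j} ≃ {k : Fin N // w₀ k = j} :=
      e.subtypeEquiv (fun p => by simp [hw₀def])
    rw [← Nat.card_congr e1, Nat.card_congr (sigmaFstFiber j), Nat.card_eq_fintype_card,
      Fintype.card_fin]
  set S := {w : Fin N → Fin m // ∀ j, Nat.card {k : Fin N // w k = j} = i j} with hS
  -- the map from permutations onto `S`
  have hmem : ∀ σ : Equiv.Perm (Fin N), (fun k => w₀ (σ k)) ∈
      {w : Fin N → Fin m | ∀ j, Nat.card {k : Fin N // w k = j} = i j} := by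
    intro σ j
    rw [← hw₀ j]
    exact Nat.card_congr (Equiv.subtypeEquiv σ (fun k => Iff.rfl))
  set Φ : Equiv.Perm (Fin N) → S := fun σ => ⟨fun k => w₀ (σ k), hmem σ⟩ with hΦ
  -- surjectivity
  have hsurj : ∀ s : S, ∃ τ : Equiv.Perm (Fin N), w₀ ∘ τ = s.1 := by
    intro s
    have hne : ∀ j, Nonempty ({k : Fin N // s.1 k = j} ≃ {k : Fin N // w₀ k = j}) := by
      intro j
      have hc : Nat.card {k : Fin N // s.1 k = j} = Nat.card {k : Fin N // w₀ k = j} := by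
        rw [s.2 j, hw₀ j]
      rw [Nat.card_eq_fintype_card, Nat.card_eq_fintype_card] at hc
      exact ⟨Fintype.equivOfCardEq hc⟩
    let f := fun j => (hne j).some
    refine ⟨Equiv.ofFiberEquiv f, ?_⟩
    funext k
    exact Equiv.ofFiberEquiv_map f k
  -- each fiber of Φ has cardinality ∏ (i j)!
  have hfiber : ∀ s : S, Fintype.card {σ : Equiv.Perm (Fin N) // Φ σ = s} =
      ∏ j, (i j)! := by
    intro s
    obtain ⟨τ, hτ⟩ := hsurj s
    have e1 : {σ : Equiv.Perm (Fin N) // Φ σ = s} ≃ {σ : Equiv.Perm (Fin N) // w₀ ∘ σ = s.1} :=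
      Equiv.subtypeEquivRight (fun σ => by
        constructor
        · rintro rfl; rfl
        · intro h; exact Subtype.ext h)
    have e2 : {σ : Equiv.Perm (Fin N) // w₀ ∘ σ = s.1} ≃ {g : Equiv.Perm (Fin N) // w₀ ∘ g = w₀} :=
      Equiv.subtypeEquiv (Equiv.mulRight τ⁻¹) (fun σ => by
        constructor
        · intro h
          funext x
          simp only [Function.comp_apply, Equiv.coe_mulRight, Equiv.Perm.mul_apply]
          rw [show w₀ (σ (τ⁻¹ x)) = s.1 (τ⁻¹ x) from congrFun h _, ← hτ]
          simp
        · intro h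
          funext x
          have h2 := congrFun h (τ x)
          simp only [Function.comp_apply, Equiv.coe_mulRight, Equiv.Perm.mul_apply] at h2
          rw [show (τ⁻¹ : Equiv.Perm (Fin N)) (τ x) = x by simp] at h2
          show w₀ (σ x) = s.1 x
          rw [h2, ← hτ]
          rfl)
    rw [Fintype.card_congr (e1.trans e2), DomMulAct.stabilizer_card w₀]
    refine Finset.prod_congr rfl (fun j _ => ?_)
    rw [← Nat.card_eq_fintype_card, hw₀ j]
  -- double counting
  have hcount : (N)! = Nat.card S * ∏ j, (i j)! := by
    calc (N)! = Fintype.card (Equiv.Perm (Fin N)) := by rw [Fintype.card_perm, Fintype.card_fin]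
    _ = Fintype.card (Σ s : S, {σ : Equiv.Perm (Fin N) // Φ σ = s}) :=
        (Fintype.card_congr (Equiv.sigmaFiberEquiv Φ)).symm
    _ = ∑ s : S, Fintype.card {σ : Equiv.Perm (Fin N) // Φ σ = s} := Fintype.card_sigma
    _ = ∑ _s : S, ∏ j, (i j)! := by exact Finset.sum_congr rfl (fun s _ => hfiber s)
    _ = Fintype.card S * ∏ j, (i j)! := by rw [Finset.sum_const, smul_eq_mul, Fintype.card]
    _ = Nat.card S * ∏ j, (i j)! := by rw [Nat.card_eq_fintype_card]
  have hspec : (∏ j, (i j)!) * Nat.multinomial Finset.univ i = (N)! := by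
    rw [Nat.multinomial_spec, hi]
  have hpos : 0 < ∏ j, (i j)! := Finset.prod_pos (fun j _ => Nat.factorial_pos _)
  apply Nat.eq_of_mul_eq_mul_left hpos
  rw [hspec, hcount, Nat.mul_comm]

/-- Strings of length `n` over `Fin m` with letter `j` occurring `i j` times. -/
abbrev typeSub (m n : ℕ) (i : Fin m → ℕ) : Type :=
  {w : Fin n → Fin m // ∀ j, Nat.card {k : Fin n // w k = j} = i j}

open Fin.NatCast in
lemma card_fiber_shift [NeZero n] (a : ℕ) (w : Fin n → Fin m) (j : Fin m) :
    Nat.card {k : Fin n // shift a w k = j} = Nat.card {k : Fin n // w k = j} :=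
  Nat.card_congr (Equiv.subtypeEquiv (Equiv.addRight ((a : Fin n))) (fun k => by
    rw [shift_apply_fin a w k]; rfl))

instance typeSubAction {i : Fin m → ℕ} [NeZero n] : AddAction (Fin n) (typeSub m n i) where
  vadd a x := ⟨shift a.val x.1, fun j => by rw [card_fiber_shift]; exact x.2 j⟩
  zero_vadd x := Subtype.ext (by
    show shift (0 : Fin n).val x.1 = x.1
    rw [Fin.val_zero, shift_zero])
  add_vadd a b x := Subtype.ext (by
    show shift (a + b).val x.1 = shift a.val (shift b.val x.1)
    rw [shift_shift, Fin.add_def, shift_mod, Nat.add_comm])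

lemma vadd_val {i : Fin m → ℕ} [NeZero n] (a : Fin n) (x : typeSub m n i) :
    (a +ᵥ x).1 = shift a.val x.1 := rfl

lemma rotRel_iff_vadd {i : Fin m → ℕ} [NeZero n] (y z : typeSub m n i) :
    rotRel y.1 z.1 ↔ ∃ a : Fin n, a +ᵥ y = z := by
  constructor
  · rintro ⟨j, hj⟩
    refine ⟨⟨j % n, Nat.mod_lt _ (Nat.pos_of_ne_zero (NeZero.ne n))⟩, Subtype.ext ?_⟩
    rw [vadd_val]
    show shift (j % n) y.1 = z.1
    rw [shift_mod, ← rot_iterate]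
    exact hj
  · rintro ⟨a, ha⟩
    refine ⟨a.val, ?_⟩
    rw [rot_iterate]
    exact congrArg Subtype.val ha

lemma rotRel_iff_orbitRel {i : Fin m → ℕ} [NeZero n] (y z : typeSub m n i) :
    rotRel y.1 z.1 ↔ (AddAction.orbitRel (Fin n) (typeSub m n i)).r y z := by
  rw [rotRel_iff_vadd]
  have : (AddAction.orbitRel (Fin n) (typeSub m n i)).r y z ↔ ∃ a : Fin n, a +ᵥ z = y := by
    rw [AddAction.orbitRel_apply, AddAction.mem_orbit_iff]
  rw [this]
  constructor
  · rintro ⟨a, rfl⟩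
    exact ⟨-a, by rw [← add_vadd]; simp⟩
  · rintro ⟨a, rfl⟩
    exact ⟨-a, by rw [← add_vadd]; simp⟩

/-- The quotient in the theorem is the orbit space of the `Fin n`-action. -/
noncomputable def quotEquivOrbit {i : Fin m → ℕ} [NeZero n] :
    Quot (fun y z : typeSub m n i => rotRel y.1 z.1) ≃
      Quotient (AddAction.orbitRel (Fin n) (typeSub m n i)) :=
  Quot.congrRight (fun y z => rotRel_iff_orbitRel y z)


/-- The number of strings of type `i` fixed by the rotation with `n/d`-fold symmetry. -/
def necklaceF (n : ℕ) {m : ℕ} (i : Fin m → ℕ) (d : ℕ) : ℕ :=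
  if ∀ l, (n / d) ∣ i l then Nat.multinomial Finset.univ (fun l => i l / (n / d)) else 0

lemma card_fixedBy {i : Fin m → ℕ} [NeZero n] (hi : ∑ j, i j = n) (a : Fin n) :
    Nat.card (AddAction.fixedBy (typeSub m n i) a) = necklaceF n i (Nat.gcd a.val n) := by
  classical
  have hn : 0 < n := Nat.pos_of_ne_zero (NeZero.ne n)
  set d := Nat.gcd a.val n with hddef
  have hd : 0 < d := Nat.gcd_pos_of_pos_right _ hn
  have hdn : d ∣ n := Nat.gcd_dvd_right a.val n
  have hnd : 0 < n / d := Nat.div_pos (Nat.le_of_dvd hn hdn) hd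
  have e1 : AddAction.fixedBy (typeSub m n i) a ≃
      {x : typeSub m n i // shift a.val x.1 = x.1} :=
    Equiv.subtypeEquivRight (fun x => by
      rw [AddAction.mem_fixedBy, Subtype.ext_iff, vadd_val])
  have e2 : {x : typeSub m n i // shift a.val x.1 = x.1} ≃
      {w : Fin n → Fin m // (∀ j, Nat.card {k : Fin n // w k = j} = i j) ∧ shift a.val w = w} :=
    Equiv.subtypeSubtypeEquivSubtypeInter
      (fun w : Fin n → Fin m => ∀ j, Nat.card {k : Fin n // w k = j} = i j)
      (fun w => shift a.val w = w)
  have e3 : {w : Fin n → Fin m // (∀ j, Nat.card {k : Fin n // w k = j} = i j) ∧ shift a.val w = w}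
      ≃ {w : Fin n → Fin m // shift d w = w ∧ ∀ j, Nat.card {k : Fin n // w k = j} = i j} :=
    Equiv.subtypeEquivRight (fun w => by rw [shift_iff_gcd a.isLt]; exact And.comm)
  have e4 : {w : Fin n → Fin m // shift d w = w ∧ ∀ j, Nat.card {k : Fin n // w k = j} = i j} ≃
      {x : {w : Fin n → Fin m // shift d w = w} //
        ∀ j, Nat.card {k : Fin n // x.1 k = j} = i j} :=
    (Equiv.subtypeSubtypeEquivSubtypeInter _ _).symm
  have e5 : {x : {w : Fin n → Fin m // shift d w = w} //
        ∀ j, Nat.card {k : Fin n // x.1 k = j} = i j} ≃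
      {b : Fin d → Fin m // ∀ j, (n / d) * Nat.card {t : Fin d // b t = j} = i j} := by
    refine Equiv.subtypeEquiv (blockEquiv hd hdn hn) (fun x => forall_congr' (fun j => ?_))
    have hx : x.1 = pExt (n := n) hd (blockEquiv hd hdn hn x) := by
      conv_lhs => rw [← (blockEquiv hd hdn hn).symm_apply_apply x]
      rfl
    rw [hx, card_fiber_pExt hd hdn]
  have hcards : Nat.card (AddAction.fixedBy (typeSub m n i) a) =
      Nat.card {b : Fin d → Fin m // ∀ j, (n / d) * Nat.card {t : Fin d // b t = j} = i j} :=
    Nat.card_congr ((((e1.trans e2).trans e3).trans e4).trans e5)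
  rw [hcards, necklaceF]
  by_cases h : ∀ l, (n / d) ∣ i l
  · rw [if_pos h]
    have e6 : {b : Fin d → Fin m // ∀ j, (n / d) * Nat.card {t : Fin d // b t = j} = i j} ≃
        {b : Fin d → Fin m // ∀ j, Nat.card {t : Fin d // b t = j} = i j / (n / d)} := by
      refine Equiv.subtypeEquivRight (fun b => forall_congr' (fun j => ?_))
      constructor
      · intro hc
        rw [← hc, Nat.mul_div_cancel_left _ hnd]
      · intro hc
        rw [hc, Nat.mul_div_cancel' (h j)]
    have hsum : ∑ l, i l / (n / d) = d := by
      have h1 : (n / d) * (∑ l, i l / (n / d)) = n := by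
        rw [Finset.mul_sum, Finset.sum_congr rfl (fun l _ => Nat.mul_div_cancel' (h l)), hi]
      refine Nat.eq_of_mul_eq_mul_left hnd ?_
      rw [h1, Nat.div_mul_cancel hdn]
    rw [Nat.card_congr e6, card_typed d m _ hsum]
  · rw [if_neg h]
    push_neg at h
    obtain ⟨l, hl⟩ := h
    have : IsEmpty {b : Fin d → Fin m // ∀ j, (n / d) * Nat.card {t : Fin d // b t = j} = i j} :=
      ⟨fun b => hl ⟨Nat.card {t : Fin d // b.1 t = l}, (b.2 l).symm⟩⟩
    exact Nat.card_of_isEmpty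

lemma sum_necklaceF (hn : 0 < n) (i : Fin m → ℕ) :
    ∑ a : Fin n, necklaceF n i (Nat.gcd a.val n) =
      ∑ d ∈ (Nat.gcd (Finset.univ.gcd i) n).divisors,
        Nat.totient d * Nat.multinomial Finset.univ (fun j => i j / d) := by
  classical
  have h1 : ∑ a : Fin n, necklaceF n i (Nat.gcd a.val n) =
      ∑ k ∈ Finset.range n, necklaceF n i (Nat.gcd k n) :=
    Fin.sum_univ_eq_sum_range (fun k => necklaceF n i (Nat.gcd k n)) n
  have hmaps : ∀ k ∈ Finset.range n, Nat.gcd n k ∈ n.divisors := fun k _ =>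
    Nat.mem_divisors.2 ⟨Nat.gcd_dvd_left n k, hn.ne'⟩
  have h2 : ∑ d ∈ n.divisors, ∑ k ∈ Finset.range n with Nat.gcd n k = d,
      necklaceF n i (Nat.gcd k n) = ∑ k ∈ Finset.range n, necklaceF n i (Nat.gcd k n) :=
    Finset.sum_fiberwise_of_maps_to hmaps _
  have h3 : ∀ d ∈ n.divisors, ∑ k ∈ Finset.range n with Nat.gcd n k = d,
      necklaceF n i (Nat.gcd k n) = Nat.totient (n / d) * necklaceF n i d := by
    intro d hd
    rw [Finset.sum_congr rfl (fun k hk => by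
      rw [Nat.gcd_comm, (Finset.mem_filter.1 hk).2]), Finset.sum_const, smul_eq_mul,
      ← Nat.totient_div_of_dvd (Nat.dvd_of_mem_divisors hd)]
  have h4 : ∑ a : Fin n, necklaceF n i (Nat.gcd a.val n) =
      ∑ d ∈ n.divisors, Nat.totient (n / d) * necklaceF n i d := by
    rw [h1, ← h2, Finset.sum_congr rfl h3]
  have h5 : ∑ d ∈ n.divisors, Nat.totient (n / d) * necklaceF n i d =
      ∑ d ∈ n.divisors, Nat.totient d * necklaceF n i (n / d) := by
    rw [← Nat.sum_div_divisors n (fun d => Nat.totient d * necklaceF n i (n / d))]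
    refine Finset.sum_congr rfl (fun d hd => ?_)
    rw [Nat.div_div_self (Nat.dvd_of_mem_divisors hd) hn.ne']
  have h6 : ∀ d ∈ n.divisors, Nat.totient d * necklaceF n i (n / d) =
      if ∀ l, d ∣ i l then Nat.totient d * Nat.multinomial Finset.univ (fun j => i j / d)
      else 0 := by
    intro d hd
    have hdd : n / (n / d) = d :=
      Nat.div_div_self (Nat.dvd_of_mem_divisors hd) hn.ne'
    rw [necklaceF, hdd]
    split_ifs with h
    · rfl
    · exact Nat.mul_zero _
  rw [h4, h5, Finset.sum_congr rfl h6, ← Finset.sum_filter]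
  refine Finset.sum_congr ?_ (fun d _ => rfl)
  ext d
  simp only [Finset.mem_filter, Nat.mem_divisors, Nat.dvd_gcd_iff, Finset.dvd_gcd_iff]
  constructor
  · rintro ⟨⟨hdvd, hne⟩, hall⟩
    exact ⟨⟨fun l _ => hall l, hdvd⟩, fun h0 => hne (Nat.eq_zero_of_gcd_eq_zero_right h0)⟩
  · rintro ⟨⟨hall, hdvd⟩, hne⟩
    exact ⟨⟨hdvd, hn.ne'⟩, fun l => hall l (Finset.mem_univ l)⟩

end Necklace


/-- The number of necklaces of length `n` and type `i` equals
`(1/n) * ∑_{d ∣ gcd(i₁,…,i_m,n)} φ(d) * (n/d)! / ((i₁/d)! ⋯ (i_m/d)!)`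
(stated multiplied through by `n`). -/
theorem necklace_count_of_type (m n : ℕ) (hn : 0 < n) (i : Fin m → ℕ)
    (hi : ∑ j, i j = n) :
    n * Nat.card (Quot (fun y z :
        {w : Fin n → Fin m // ∀ j, Nat.card {k : Fin n // w k = j} = i j} =>
        rotRel y.1 z.1)) =
      ∑ d ∈ (Nat.gcd (Finset.univ.gcd i) n).divisors,
        Nat.totient d * Nat.multinomial Finset.univ (fun j => i j / d) := by
  classical
  haveI : NeZero n := ⟨hn.ne'⟩
  letI : Fintype (Necklace.typeSub m n i) := Fintype.ofFinite _
  letI : ∀ a : Fin n, Fintype (AddAction.fixedBy (Necklace.typeSub m n i) a) :=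
    fun a => Fintype.ofFinite _
  letI : Fintype (Quotient (AddAction.orbitRel (Fin n) (Necklace.typeSub m n i))) :=
    Fintype.ofFinite _
  have hburn := AddAction.sum_card_fixedBy_eq_card_orbits_mul_card_addGroup
    (Fin n) (Necklace.typeSub m n i)
  rw [Fintype.card_fin] at hburn
  have hquot : Nat.card (Quot (fun y z :
      {w : Fin n → Fin m // ∀ j, Nat.card {k : Fin n // w k = j} = i j} =>
        rotRel y.1 z.1)) =
      Fintype.card (Quotient (AddAction.orbitRel (Fin n) (Necklace.typeSub m n i))) := by
    rw [Nat.card_congr (Necklace.quotEquivOrbit (i := i)), Nat.card_eq_fintype_card]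
  rw [hquot, Nat.mul_comm, ← hburn]
  rw [← Necklace.sum_necklaceF hn i]
  refine Finset.sum_congr rfl (fun a _ => ?_)
  rw [← Necklace.card_fixedBy hi a, Nat.card_eq_fintype_card]
end
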